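/- arXiv:2202.04280 — 5 statements merged into one kernel-verified Lean document; each statement's English description precedes it below -/
import Mathlib

section
/- Let Q act on a group N by automorphisms σ and let Γ = N ⋊_σ Q, with Q identified with {(e,q)}. Then Q is almost malnormal in Γ (i.e., gQg⁻¹ ∩ Q is finite for every g ∈ Γ∖Q) if and only if for every n ∈ N with n ≠ e, the stabilizer Stab_Q(n) = {r ∈ Q : σ_r(n) = n} is finite. -/
open SemidirectProduct

lemma conj_inr_eq {N Q : Type*} [Group N] [Group Q] (σ : Q →* MulAut N)
    (g : N ⋊[σ] Q) (r : Q) :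
    g * SemidirectProduct.inr r * g⁻¹ =
      ⟨g.left * σ (g.right * r * g.right⁻¹) g.left⁻¹, g.right * r * g.right⁻¹⟩ := by
  ext <;> simp [mul_assoc, MulAut.mul_apply]

lemma inter_eq {N Q : Type*} [Group N] [Group Q] (σ : Q →* MulAut N) (g : N ⋊[σ] Q) :
    ({x : N ⋊[σ] Q | ∃ q : Q, x = g * SemidirectProduct.inr q * g⁻¹} ∩
        Set.range (fun q : Q => (SemidirectProduct.inr q : N ⋊[σ] Q))) =
      SemidirectProduct.inr '' {s : Q | σ s g.left = g.left} := by
  ext x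
  constructor
  · rintro ⟨⟨r, rfl⟩, ⟨s, hs⟩⟩
    rw [conj_inr_eq] at hs ⊢
    have hleft : g.left * σ (g.right * r * g.right⁻¹) g.left⁻¹ = 1 := by
      have := congrArg SemidirectProduct.left hs
      simpa using this.symm
    have hstab : σ (g.right * r * g.right⁻¹) g.left = g.left := by
      have h1 : σ (g.right * r * g.right⁻¹) g.left⁻¹ = g.left⁻¹ :=
        eq_inv_of_mul_eq_one_right hleft
      rw [map_inv, inv_inj] at h1
      exact h1
    have hstab' : σ (g.right * (r * g.right⁻¹)) g.left = g.left := by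
      rw [← mul_assoc]; exact hstab
    exact ⟨g.right * r * g.right⁻¹, hstab,
      by ext <;> simp [← MulAut.mul_apply, ← map_mul, mul_assoc, hstab']⟩
  · rintro ⟨s, hs, rfl⟩
    refine ⟨⟨g.right⁻¹ * s * g.right, ?_⟩, ⟨s, rfl⟩⟩
    rw [conj_inr_eq]
    have : g.right * (g.right⁻¹ * s * g.right) * g.right⁻¹ = s := by group
    rw [this]
    have hs' : σ s g.left = g.left := hs
    ext <;> simp [hs']

lemma mem_range_inr_iff {N Q : Type*} [Group N] [Group Q] (σ : Q →* MulAut N)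
    (g : N ⋊[σ] Q) :
    g ∈ Set.range (fun q : Q => (SemidirectProduct.inr q : N ⋊[σ] Q)) ↔ g.left = 1 := by
  constructor
  · rintro ⟨q, rfl⟩; simp
  · intro h; exact ⟨g.right, by ext <;> simp [h]⟩

/-- `Q` is almost malnormal in `N ⋊[σ] Q` iff every nontrivial element of `N` has finite
stabilizer in `Q`. -/
theorem stmt6 {N Q : Type*} [Group N] [Group Q] (σ : Q →* MulAut N) :
    (∀ g : N ⋊[σ] Q,
        g ∉ Set.range (fun q : Q => (SemidirectProduct.inr q : N ⋊[σ] Q)) →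
        ({x : N ⋊[σ] Q | ∃ q : Q, x = g * SemidirectProduct.inr q * g⁻¹} ∩
          Set.range (fun q : Q => (SemidirectProduct.inr q : N ⋊[σ] Q))).Finite) ↔
    (∀ n : N, n ≠ 1 → {r : Q | σ r n = n}.Finite) := by
  constructor
  · intro h n hn
    have hg : (SemidirectProduct.inl n : N ⋊[σ] Q) ∉
        Set.range (fun q : Q => (SemidirectProduct.inr q : N ⋊[σ] Q)) := by
      rw [mem_range_inr_iff]; simpa using hn
    have hfin := h (SemidirectProduct.inl n) hg
    rw [inter_eq] at hfin
    simp only [SemidirectProduct.left_inl] at hfin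
    exact Set.Finite.of_finite_image hfin
      (SemidirectProduct.inr_injective.injOn)
  · intro h g hg
    rw [mem_range_inr_iff] at hg
    rw [inter_eq]
    exact (h g.left hg).image _
end

section
/- Let H ≤ G be an infinite malnormal subgroup (gHg⁻¹ ∩ H = {e} for all g ∈ G∖H). Then the one-sided quasinormalizer of H in G equals H: if g ∈ G and there exists a finite set F ⊆ G with Hg ⊆ FH, then g ∈ H. -/
open scoped Pointwise

/-- An infinite malnormal subgroup equals its own one-sided quasinormalizer. -/
theorem stmt7 {G : Type*} [Group G] (H : Subgroup G) (hinf : (H : Set G).Infinite)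
    (hmal : ∀ g : G, g ∉ H → ∀ h ∈ H, g * h * g⁻¹ ∈ H → g * h * g⁻¹ = 1)
    (g : G) (F : Finset G) (hF : (H : Set G) * {g} ⊆ (F : Set G) * (H : Set G)) :
    g ∈ H := by
  by_contra hg
  have hchoice : ∀ h, h ∈ (H : Set G) → ∃ f ∈ (F : Set G), ∃ k ∈ (H : Set G), f * k = h * g := by
    intro h hh
    have : h * g ∈ (F : Set G) * (H : Set G) :=
      hF (Set.mul_mem_mul hh (Set.mem_singleton g))
    rwa [Set.mem_mul] at this
  classical
  set φ : G → G := fun h => if hh : h ∈ (H : Set G) then (hchoice h hh).choose else 1 with hφ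
  have hmaps : Set.MapsTo φ (H : Set G) (F : Set G) := by
    intro h hh
    simp only [hφ, dif_pos hh]
    exact (hchoice h hh).choose_spec.1
  obtain ⟨h₁, hh₁, h₂, hh₂, hne, heq⟩ :=
    hinf.exists_ne_map_eq_of_mapsTo hmaps F.finite_toSet
  obtain ⟨k₁, hk₁, hfk₁⟩ := (hchoice h₁ hh₁).choose_spec.2
  obtain ⟨k₂, hk₂, hfk₂⟩ := (hchoice h₂ hh₂).choose_spec.2
  have hφ₁ : φ h₁ = (hchoice h₁ hh₁).choose := dif_pos hh₁
  have hφ₂ : φ h₂ = (hchoice h₂ hh₂).choose := dif_pos hh₂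
  have heq' : (hchoice h₁ hh₁).choose = (hchoice h₂ hh₂).choose := by
    rw [← hφ₁, ← hφ₂, heq]
  set f := (hchoice h₂ hh₂).choose with hf
  rw [heq'] at hfk₁
  have ek₁ : k₁ = f⁻¹ * (h₁ * g) := eq_inv_mul_iff_mul_eq.mpr hfk₁
  have ek₂ : k₂ = f⁻¹ * (h₂ * g) := eq_inv_mul_iff_mul_eq.mpr hfk₂
  have key : g * (k₂⁻¹ * k₁) * g⁻¹ = h₂⁻¹ * h₁ := by
    rw [ek₁, ek₂]; group
  have hmem : g * (k₂⁻¹ * k₁) * g⁻¹ ∈ H := by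
    rw [key]
    exact mul_mem (inv_mem hh₂) hh₁
  have := hmal g hg (k₂⁻¹ * k₁) (mul_mem (inv_mem hk₂) hk₁) hmem
  rw [key] at this
  exact hne (inv_mul_eq_one.mp this).symm
end

section
/- Let H ≤ G be an infinite almost malnormal subgroup (gHg⁻¹ ∩ H is finite for every g ∈ G∖H). Then QN^{(1)}_G(H) = H: whenever g ∈ G and Hg ⊆ FH for some finite set F ⊆ G, one has g ∈ H. -/
open scoped Pointwise

/-- An infinite almost malnormal subgroup equals its own one-sided quasinormalizer. -/
theorem stmt8 {G : Type*} [Group G] (H : Subgroup G) (hinf : (H : Set G).Infinite)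
    (hmal : ∀ g : G, g ∉ H → ({x : G | ∃ h ∈ H, x = g * h * g⁻¹} ∩ (H : Set G)).Finite)
    (g : G) (F : Finset G) (hF : (H : Set G) * {g} ⊆ (F : Set G) * (H : Set G)) :
    g ∈ H := by
  set S : G → Set G := fun f => {h : G | h ∈ H ∧ ∃ k ∈ H, h * g = f * k} with hS
  have hcover : (H : Set G) ⊆ ⋃ f ∈ F, S f := by
    intro h hh
    have hmem : h * g ∈ (F : Set G) * (H : Set G) := hF (Set.mul_mem_mul hh rfl)
    obtain ⟨f, hf, k, hk, hfk⟩ := hmem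
    exact Set.mem_biUnion hf ⟨hh, k, hk, hfk.symm⟩
  have hex : ∃ f ∈ F, (S f).Infinite := by
    by_contra hfin
    push_neg at hfin
    exact hinf ((Set.Finite.biUnion F.finite_toSet hfin).subset hcover)
  obtain ⟨f, hfF, hSf⟩ := hex
  obtain ⟨h₀, hh₀H, k₀, hk₀, hk₀eq⟩ := hSf.nonempty
  have hfH : f ∈ H := by
    by_contra hfnot
    have hT := hmal f hfnot
    apply hSf
    have hsub : S f ⊆ (· * h₀) '' ({x : G | ∃ h ∈ H, x = f * h * f⁻¹} ∩ (H : Set G)) := by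
      rintro h ⟨hhH, k, hkH, hkeq⟩
      refine ⟨h * h₀⁻¹, ⟨⟨k * k₀⁻¹, mul_mem hkH (inv_mem hk₀), ?_⟩,
        mul_mem hhH (inv_mem hh₀H)⟩, by group⟩
      have h1 : h = f * k * g⁻¹ := by rw [← hkeq]; group
      have h2 : h₀ = f * k₀ * g⁻¹ := by rw [← hk₀eq]; group
      rw [h1, h2]; group
    exact (hT.image _).subset hsub
  have hg : g = h₀⁻¹ * (f * k₀) := by rw [← hk₀eq]; group
  rw [hg]
  exact mul_mem (inv_mem hh₀H) (mul_mem hfH hk₀)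
end

section
/- Let Q act on a group N by automorphisms σ. Suppose N is icc, and suppose that for every q ∈ Q with q ≠ e and every m ∈ N, the subgroup {n ∈ N : σ_q(n) = m⁻¹ n m} has infinite index in N. Then the semidirect product Γ = N ⋊_σ Q is icc. -/
/-- The subgroup `{n ∈ N : σ_q(n) = m⁻¹ n m}` of twisted fixed points. -/
def twistedFix {N Q : Type*} [Group N] [Group Q] (σ : Q →* MulAut N) (q : Q) (m : N) :
    Subgroup N where
  carrier := {n | σ q n = m⁻¹ * n * m}
  one_mem' := by simp
  mul_mem' := by
    intro a b ha hb
    simp only [Set.mem_setOf_eq, map_mul] at *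
    rw [ha, hb]
    group
  inv_mem' := by
    intro a ha
    simp only [Set.mem_setOf_eq, map_inv] at *
    rw [ha]
    group

lemma conj_inl {N Q : Type*} [Group N] [Group Q] (σ : Q →* MulAut N) (c n : N) (q : Q) :
    (SemidirectProduct.inl c : N ⋊[σ] Q) * ⟨n, q⟩ * (SemidirectProduct.inl c)⁻¹
      = (⟨c * n * σ q c⁻¹, q⟩ : N ⋊[σ] Q) := by
  ext <;> simp [mul_assoc]

/-- If `N` is icc and all the twisted fixed-point subgroups `{n : σ_q(n) = m⁻¹ n m}` (for
`q ≠ e`) have infinite index in `N`, then `N ⋊[σ] Q` is icc. -/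
theorem stmt14 {N Q : Type*} [Group N] [Group Q] (σ : Q →* MulAut N)
    (hN : ∀ n : N, n ≠ 1 → {x : N | ∃ c : N, x = c * n * c⁻¹}.Infinite)
    (hidx : ∀ q : Q, q ≠ 1 → ∀ m : N, (twistedFix σ q m).index = 0) :
    ∀ g : N ⋊[σ] Q, g ≠ 1 → {x : N ⋊[σ] Q | ∃ c : N ⋊[σ] Q, x = c * g * c⁻¹}.Infinite := by
  rintro ⟨n, q⟩ hg
  by_cases hq : q = 1
  · subst hq
    have hn : n ≠ 1 := by
      intro h; subst h; exact hg rfl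
    have h1 : (SemidirectProduct.inl : N →* N ⋊[σ] Q) ''
        {x : N | ∃ c : N, x = c * n * c⁻¹} ⊆
        {x : N ⋊[σ] Q | ∃ c : N ⋊[σ] Q, x = c * ⟨n, 1⟩ * c⁻¹} := by
      rintro _ ⟨x, ⟨c, rfl⟩, rfl⟩
      refine ⟨SemidirectProduct.inl c, ?_⟩
      rw [conj_inl]
      ext <;> simp
    exact Set.Infinite.mono h1 (((hN n hn).image
      (Set.injOn_of_injective SemidirectProduct.inl_injective)))
  · -- q ≠ 1
    have : Infinite (N ⧸ twistedFix σ q n) :=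
      Subgroup.index_eq_zero_iff_infinite.mp (hidx q hq n)
    set H := twistedFix σ q n with hH
    have key : ∀ c d : N,
        ((⟨c * n * σ q c⁻¹, q⟩ : N ⋊[σ] Q) = ⟨d * n * σ q d⁻¹, q⟩) ↔ c⁻¹ * d ∈ H := by
      intro c d
      constructor
      · intro h
        have h1 : c * n * σ q c⁻¹ = d * n * σ q d⁻¹ := congrArg SemidirectProduct.left h
        show σ q (c⁻¹ * d) = n⁻¹ * (c⁻¹ * d) * n
        have : σ q (c⁻¹ * d) = n⁻¹ * c⁻¹ * (c * n * σ q c⁻¹) * σ q d := by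
          simp [map_mul, map_inv]; group
        rw [this, h1]
        simp [map_mul, map_inv]; group
      · intro h
        have h1 : σ q (c⁻¹ * d) = n⁻¹ * (c⁻¹ * d) * n := h
        have h2 : c * n * σ q c⁻¹ = d * n * σ q d⁻¹ := by
          have : σ q d = σ q c * (n⁻¹ * (c⁻¹ * d) * n) := by
            rw [← h1]; simp [map_mul, map_inv]
          rw [show (σ q) d⁻¹ = ((σ q) d)⁻¹ from map_inv _ _, this, map_inv]; group
        rw [h2]
    let f : N ⧸ H → N ⋊[σ] Q := Quotient.lift
      (fun c => (⟨c * n * σ q c⁻¹, q⟩ : N ⋊[σ] Q))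
      (by
        intro c d hcd
        exact (key c d).mpr ((QuotientGroup.leftRel_apply).mp hcd))
    have hinj : Function.Injective f := by
      intro x y
      induction x using Quotient.inductionOn
      induction y using Quotient.inductionOn
      intro h
      exact Quotient.sound ((QuotientGroup.leftRel_apply).mpr ((key _ _).mp h))
    have hmem : ∀ x : N ⧸ H, f x ∈
        {x : N ⋊[σ] Q | ∃ c : N ⋊[σ] Q, x = c * ⟨n, q⟩ * c⁻¹} := by
      intro x
      induction x using Quotient.inductionOn with
      | h c => exact ⟨SemidirectProduct.inl c, (conj_inl σ c n q).symm⟩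
    exact Set.infinite_of_injective_forall_mem hinj hmem
end

section
/- Let Γ = N ⋊_σ Q where the action of Q on N∖{e} has only finite stabilizers (Stab_Q(n) is finite for every n ≠ e) and Q is infinite. Then, identifying Q with {(e,q)} ≤ Γ, one has QN^{(1)}_Γ(Q) = Q: whenever g ∈ Γ and Qg ⊆ FQ for some finite F ⊆ Γ, then g ∈ Q. -/
open scoped Pointwise

/-- If `Q` is infinite and acts on `N` with finite stabilizers on `N ∖ {e}`, then the one-sided
quasinormalizer of `Q` in `N ⋊[σ] Q` equals `Q`. -/
theorem stmt16 {N Q : Type*} [Group N] [Group Q] [Infinite Q] (σ : Q →* MulAut N)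
    (hstab : ∀ n : N, n ≠ 1 → {r : Q | σ r n = n}.Finite)
    (g : N ⋊[σ] Q) (F : Finset (N ⋊[σ] Q))
    (hF : {x : N ⋊[σ] Q | ∃ q : Q, x = SemidirectProduct.inr q * g} ⊆
      (F : Set (N ⋊[σ] Q)) * Set.range (fun q : Q => (SemidirectProduct.inr q : N ⋊[σ] Q))) :
    g ∈ Set.range (fun q : Q => (SemidirectProduct.inr q : N ⋊[σ] Q)) := by
  rcases eq_or_ne g.left 1 with h1 | h1
  classical
  · exact ⟨g.right, by ext <;> simp [h1]⟩
  · exfalso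
    -- each fiber of r ↦ σ r g.left is finite
    have hfib : ∀ m : N, {r : Q | σ r g.left = m}.Finite := by
      intro m
      rcases Set.eq_empty_or_nonempty {r : Q | σ r g.left = m} with he | ⟨r₀, hr₀⟩
      · simp [he]
      · have hsub : {r : Q | σ r g.left = m} ⊆
            (fun s => r₀ * s) '' {s : Q | σ s g.left = g.left} := by
          intro r hr
          refine ⟨r₀⁻¹ * r, ?_, by group⟩
          have h2 : σ (r₀⁻¹ * r) g.left = σ (r₀⁻¹ * r₀) g.left := by
            rw [map_mul, map_mul]
            simp only [MulAut.mul_apply]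
            rw [hr, hr₀]
          simpa using h2
        exact (((hstab g.left h1).image _).subset hsub)
    -- all values σ r g.left lie in the finite set F.image left
    have hval : ∀ r : Q, σ r g.left ∈ (F.image SemidirectProduct.left : Finset N) := by
      intro r
      have hx : (SemidirectProduct.inr r * g : N ⋊[σ] Q) ∈
          (F : Set (N ⋊[σ] Q)) * Set.range (fun q : Q => (SemidirectProduct.inr q : N ⋊[σ] Q)) :=
        hF ⟨r, rfl⟩
      rcases hx with ⟨a, ha, b, ⟨s, rfl⟩, hab⟩
      have hleft : σ r g.left = a.left := by
        have := congrArg SemidirectProduct.left hab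
        simpa using this.symm
      rw [hleft]
      exact Finset.mem_image_of_mem _ ha
    have huniv : (Set.univ : Set Q) ⊆
        ⋃ m ∈ (F.image SemidirectProduct.left : Finset N), {r : Q | σ r g.left = m} := by
      intro r _
      exact Set.mem_biUnion (hval r) rfl
    have hfin : (Set.univ : Set Q).Finite :=
      (Set.Finite.biUnion (F.image SemidirectProduct.left).finite_toSet fun m _ => hfib m).subset
        huniv
    exact Set.infinite_univ hfin
end
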